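/- arXiv:2003.05575 — 3 statements merged into one kernel-verified Lean document; each statement's English description precedes it below -/
import Mathlib

section
/- Let m, n ≥ 1, η ∈ [0,1], and ζ, Δ, α ≥ 0 with α ≥ 2Δ + ζ. Let A′ be a random matrix over F₂^{m×n} that is an (η, n·(1−ζ))-block source, and let x be a random vector over F₂^n with H_∞(x) ≥ α·n, where A′ and x are independent. Then there exists a set T ⊆ {1, …, m} with |T| ≥ (1−η)·m such that the distribution of (A′x)_T — the restriction to the coordinates in T of the matrix-vector product A′x ∈ F₂^m — is ε-close to the uniform distribution on F₂^T for some ε ≤ |T|·2^{−Δ·n}. -/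
open Finset

open Classical in
/-- Probability of an event for a random matrix over `F₂` with mass function `μ`. -/
noncomputable def prEvt {m n : ℕ} (μ : Matrix (Fin m) (Fin n) (ZMod 2) → ℝ)
    (E : Matrix (Fin m) (Fin n) (ZMod 2) → Prop) : ℝ :=
  ∑ A, if E A then μ A else 0

/-- `rowsAgree i A B` says that the first `i` rows of `A` and `B` coincide. -/
def rowsAgree {m n : ℕ} (i : ℕ) (A B : Matrix (Fin m) (Fin n) (ZMod 2)) : Prop :=
  ∀ j : Fin m, (j : ℕ) < i → A j = B j

/-- `ν` (a distribution on `F₂^{m×n}`) is an `(η, n')`-block source: there is a set `S` of at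
most `η·m` rows such that for every matrix in the support and every row `i ∉ S`, every value of
row `i` has conditional probability at most `2^{-n'}` given the previous rows. -/
def IsBlockSource {m n : ℕ} (ν : Matrix (Fin m) (Fin n) (ZMod 2) → ℝ) (η n' : ℝ) : Prop :=
  ∃ S : Finset (Fin m), (S.card : ℝ) ≤ η * (m : ℝ) ∧
    ∀ A₀, 0 < ν A₀ → ∀ i : Fin m, i ∉ S → ∀ w : Fin n → ZMod 2,
      prEvt ν (fun C => C i = w ∧ rowsAgree (i : ℕ) C A₀)
        / prEvt ν (fun C => rowsAgree (i : ℕ) C A₀) ≤ (2 : ℝ) ^ (-n')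

open Classical in
/-- The distribution of the restriction of the matrix-vector product `A·x` to the rows in `T`,
where `A ~ μA` and `x ~ μx` are independent. -/
noncomputable def prodDistOn {m n : ℕ} (μA : Matrix (Fin m) (Fin n) (ZMod 2) → ℝ)
    (μx : (Fin n → ZMod 2) → ℝ) (T : Finset (Fin m))
    (z : {i : Fin m // i ∈ T} → ZMod 2) : ℝ :=
  ∑ A, ∑ x₀,
    if (∀ i : {i : Fin m // i ∈ T}, A.mulVec x₀ i.1 = z i) then μA A * μx x₀ else 0

namespace BSE

open Matrix

noncomputable def sgn (b : ZMod 2) : ℝ := if b = 0 then 1 else -1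

lemma zmod2_cases (b : ZMod 2) : b = 0 ∨ b = 1 := by revert b; decide

lemma sgn_add (a b : ZMod 2) : sgn (a + b) = sgn a * sgn b := by
  rcases zmod2_cases a with ha | ha <;> rcases zmod2_cases b with hb | hb <;>
    subst ha <;> subst hb <;>
      simp [sgn, (by decide : (1+1:ZMod 2) = 0), (by decide : (1:ZMod 2) ≠ 0)] <;> norm_num

lemma abs_sgn (a : ZMod 2) : |sgn a| = 1 := by
  rcases zmod2_cases a with ha | ha <;> subst ha <;> norm_num [sgn]

lemma two_ind_sub_one (a b : ZMod 2) :
    2 * (if a = b then (1:ℝ) else 0) - 1 = sgn (a + b) := by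
  rcases zmod2_cases a with ha | ha <;> rcases zmod2_cases b with hb | hb <;>
    subst ha <;> subst hb <;>
      simp [sgn, (by decide : (1+1:ZMod 2) = 0), (by decide : (1:ZMod 2) ≠ 0)] <;> norm_num

lemma zmod2_add_eq_zero (a b : ZMod 2) : a + b = 0 ↔ a = b := by
  rcases zmod2_cases a with ha | ha <;> rcases zmod2_cases b with hb | hb <;>
    subst ha <;> subst hb <;> simp <;> decide

lemma vec_add_eq_zero {n : ℕ} (v w : Fin n → ZMod 2) : v + w = 0 ↔ v = w := by
  constructor
  · intro h; funext j
    exact (zmod2_add_eq_zero _ _).1 (congrFun h j)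
  · rintro rfl; funext j; exact (zmod2_add_eq_zero _ _).2 rfl

lemma sum_sgn_dot {n : ℕ} (v : Fin n → ZMod 2) :
    ∑ x : Fin n → ZMod 2, sgn (v ⬝ᵥ x) = if v = 0 then ((2:ℝ)^n) else 0 := by
  by_cases hv : v = 0
  · subst hv
    simp only [zero_dotProduct, if_true]
    have h1 : (sgn 0 : ℝ) = 1 := by norm_num [sgn]
    rw [Finset.sum_const, h1]
    simp [Fintype.card_fun]
  · rw [if_neg hv]
    obtain ⟨j, hj⟩ : ∃ j, v j ≠ 0 := by
      by_contra h
      push_neg at h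
      exact hv (funext fun j => h j)
    have hj1 : v j = 1 := by rcases zmod2_cases (v j) with h | h; exact absurd h hj; exact h
    set δ : Fin n → ZMod 2 := fun k => if k = j then 1 else 0 with hδ
    have hdot : ∀ x, v ⬝ᵥ (x + δ) = v ⬝ᵥ x + 1 := by
      intro x
      rw [dotProduct_add]
      congr 1
      have h2 : v ⬝ᵥ δ = v j := by
        simp only [dotProduct, hδ, mul_ite, mul_one, mul_zero]
        exact (Finset.sum_ite_eq' _ _ _).trans (by simp)
      rw [h2, hj1]
    have key : ∑ x : Fin n → ZMod 2, sgn (v ⬝ᵥ (x + δ))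
        = ∑ x : Fin n → ZMod 2, sgn (v ⬝ᵥ x) :=
      Fintype.sum_equiv (Equiv.addRight δ) _ _ (fun x => rfl)
    have key2 : ∑ x : Fin n → ZMod 2, sgn (v ⬝ᵥ (x + δ))
        = -∑ x : Fin n → ZMod 2, sgn (v ⬝ᵥ x) := by
      rw [← Finset.sum_neg_distrib]
      refine Finset.sum_congr rfl fun x _ => ?_
      rw [hdot x, sgn_add]
      have h3 : sgn 1 = -1 := by norm_num [sgn]
      rw [h3]; ring
    have := key.symm.trans key2
    linarith


-- counting lemma
lemma count_agree {m : ℕ} (T : Finset (Fin m)) (y : Fin m → ZMod 2) :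
    ∑ z : Fin m → ZMod 2, (if ∀ j ∈ T, y j = z j then (1:ℝ) else 0)
      = 2^m / 2^T.card := by
  classical
  set e := (Equiv.piEquivPiSubtypeProd (· ∈ T) (fun _ : Fin m => ZMod 2)).symm with he
  rw [← Fintype.sum_equiv e
      (fun p => if ∀ j ∈ T, y j = (e p) j then (1:ℝ) else 0)
      (fun z => if ∀ j ∈ T, y j = z j then (1:ℝ) else 0) (fun p => rfl)]
  have hcond : ∀ (a : {x : Fin m // x ∈ T} → ZMod 2) (b : {x : Fin m // ¬ x ∈ T} → ZMod 2),
      (∀ j ∈ T, y j = (e (a, b)) j) ↔ a = fun i => y i.1 := by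
    intro a b
    rw [he]
    constructor
    · intro h; funext i
      have h2 := h i.1 i.2
      rw [Equiv.piEquivPiSubtypeProd_symm_apply] at h2
      rw [dif_pos i.2] at h2
      exact h2.symm
    · rintro rfl
      intro j hj
      rw [Equiv.piEquivPiSubtypeProd_symm_apply, dif_pos hj]
  rw [Fintype.sum_prod_type]
  have hsum : ∀ a, (∑ b : {x : Fin m // ¬ x ∈ T} → ZMod 2,
      if ∀ j ∈ T, y j = (e (a, b)) j then (1:ℝ) else 0)
      = if a = (fun i => y i.1) then (Fintype.card ({x : Fin m // ¬ x ∈ T} → ZMod 2) : ℝ) else 0 := by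
    intro a
    by_cases ha : a = fun i => y i.1
    · rw [if_pos ha, Finset.sum_congr rfl (fun b _ => if_pos ((hcond a b).2 ha))]
      simp
    · rw [if_neg ha, Finset.sum_congr rfl (fun b _ => if_neg (fun h => ha ((hcond a b).1 h)))]
      simp
  rw [Finset.sum_congr rfl (fun a _ => hsum a)]
  simp only [Finset.sum_ite_eq', Finset.mem_univ, if_true]
  have hcard : Fintype.card ({x : Fin m // ¬ x ∈ T} → ZMod 2) = 2^(m - T.card) := by
    simp [Fintype.card_fun, ZMod.card, Fintype.card_subtype_compl]
  rw [hcard]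
  have hle : T.card ≤ m := by simpa using Finset.card_le_univ T
  push_cast
  rw [pow_sub₀ (2:ℝ) (by norm_num) hle, div_eq_mul_inv]


lemma cs_core {n : ℕ} (q : (Fin n → ZMod 2) → ℝ) (hq0 : ∀ w, 0 ≤ q w)
    (B p : ℝ) (hB : ∀ w, q w ≤ B) (hQ : ∑ w, q w = p)
    (μx : (Fin n → ZMod 2) → ℝ) (hx0 : ∀ x, 0 ≤ μx x) (hx1 : ∑ x, μx x = 1)
    (c2 : ℝ) (hc2 : ∀ x, μx x ≤ c2) :
    (∑ x : Fin n → ZMod 2, μx x * |∑ w, q w * sgn (w ⬝ᵥ x)|)^2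
      ≤ ((2:ℝ)^n) * B * p * c2 := by
  set h : (Fin n → ZMod 2) → ℝ := fun x => ∑ w, q w * sgn (w ⬝ᵥ x) with hh
  have cs := Finset.sum_mul_sq_le_sq_mul_sq Finset.univ μx (fun x => |h x|)
  have hμ2 : ∑ x : Fin n → ZMod 2, μx x ^ 2 ≤ c2 := by
    calc ∑ x : Fin n → ZMod 2, μx x ^ 2 ≤ ∑ x : Fin n → ZMod 2, c2 * μx x := by
          refine Finset.sum_le_sum fun x _ => ?_
          rw [sq]
          exact mul_le_mul_of_nonneg_right (hc2 x) (hx0 x)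
      _ = c2 := by rw [← Finset.mul_sum, hx1, mul_one]
  have hh2 : ∑ x : Fin n → ZMod 2, (|h x|) ^ 2 ≤ ((2:ℝ)^n) * B * p := by
    have habs : ∀ x, (|h x|)^2 = h x ^ 2 := fun x => sq_abs _
    rw [Finset.sum_congr rfl (fun x _ => habs x)]
    have expand : ∀ x : Fin n → ZMod 2, h x ^ 2
        = ∑ w, ∑ w', (q w * q w') * sgn ((w + w') ⬝ᵥ x) := by
      intro x
      rw [hh, sq, Finset.sum_mul_sum]
      refine Finset.sum_congr rfl fun w _ => Finset.sum_congr rfl fun w' _ => ?_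
      rw [add_dotProduct, sgn_add]
      ring
    rw [Finset.sum_congr rfl (fun x _ => expand x), Finset.sum_comm]
    have inner : ∀ w : Fin n → ZMod 2,
        (∑ x : Fin n → ZMod 2, ∑ w', (q w * q w') * sgn ((w + w') ⬝ᵥ x))
        = q w ^ 2 * (2:ℝ)^n := by
      intro w
      rw [Finset.sum_comm]
      have : ∀ w' : Fin n → ZMod 2,
          (∑ x : Fin n → ZMod 2, (q w * q w') * sgn ((w + w') ⬝ᵥ x))
          = (q w * q w') * (if w' = w then (2:ℝ)^n else 0) := by
        intro w'
        rw [← Finset.mul_sum, sum_sgn_dot]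
        congr 2
        rw [vec_add_eq_zero]
        exact propext ⟨Eq.symm, Eq.symm⟩
      rw [Finset.sum_congr rfl (fun w' _ => this w')]
      simp only [mul_ite, mul_zero]
      rw [Finset.sum_ite_eq' Finset.univ w (fun w' => q w * q w' * (2:ℝ)^n)]
      simp [sq]
    rw [Finset.sum_congr rfl (fun w _ => inner w)]
    calc ∑ w : Fin n → ZMod 2, q w ^2 * (2:ℝ)^n
        ≤ ∑ w : Fin n → ZMod 2, (B * q w) * (2:ℝ)^n := by
          refine Finset.sum_le_sum fun w _ => ?_
          refine mul_le_mul_of_nonneg_right ?_ (by positivity)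
          rw [sq]
          exact mul_le_mul_of_nonneg_right (hB w) (hq0 w)
      _ = ((2:ℝ)^n) * B * p := by
          rw [← Finset.sum_mul, ← Finset.mul_sum, hQ]; ring
  calc (∑ x : Fin n → ZMod 2, μx x * |h x|)^2
      ≤ (∑ x : Fin n → ZMod 2, μx x ^2) * ∑ x : Fin n → ZMod 2, (|h x|)^2 := cs
    _ ≤ c2 * (((2:ℝ)^n) * B * p) := by
        refine mul_le_mul hμ2 hh2 ?_ ?_
        · positivity
        · have : 0 ≤ ∑ x : Fin n → ZMod 2, μx x ^2 := by positivity
          -- need 0 ≤ c2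
          calc (0:ℝ) ≤ μx default := hx0 _
            _ ≤ c2 := hc2 _
    _ = ((2:ℝ)^n) * B * p * c2 := by ring


variable {m n : ℕ}

def trunc (i : Fin m) (A : Matrix (Fin m) (Fin n) (ZMod 2)) :
    Matrix (Fin m) (Fin n) (ZMod 2) :=
  fun j => if (j : ℕ) < (i : ℕ) then A j else 0

lemma trunc_row_eq (i : Fin m) (A : Matrix (Fin m) (Fin n) (ZMod 2)) (j : Fin m)
    (hj : (j : ℕ) < (i : ℕ)) : trunc i A j = A j := by
  simp [trunc, hj]

lemma rowsAgree_iff_trunc (i : Fin m) (C A₀ : Matrix (Fin m) (Fin n) (ZMod 2)) :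
    rowsAgree (i : ℕ) C A₀ ↔ trunc i C = trunc i A₀ := by
  constructor
  · intro h; funext j k
    by_cases hj : (j:ℕ) < (i:ℕ)
    · simp [trunc, hj, h j hj]
    · simp [trunc, hj]
  · intro h j hj
    have := congrFun h j
    simpa [trunc, hj] using this

noncomputable def pre (μA : Matrix (Fin m) (Fin n) (ZMod 2) → ℝ) (i : Fin m)
    (P : Matrix (Fin m) (Fin n) (ZMod 2)) : ℝ :=
  ∑ A, if trunc i A = P then μA A else 0

noncomputable def preRow (μA : Matrix (Fin m) (Fin n) (ZMod 2) → ℝ) (i : Fin m)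
    (P : Matrix (Fin m) (Fin n) (ZMod 2)) (w : Fin n → ZMod 2) : ℝ :=
  ∑ A, if trunc i A = P ∧ A i = w then μA A else 0

variable {μA : Matrix (Fin m) (Fin n) (ZMod 2) → ℝ}

lemma pre_nonneg (hA0 : ∀ A, 0 ≤ μA A) (i : Fin m) (P) : 0 ≤ pre μA i P :=
  Finset.sum_nonneg fun A _ => by split
                                  · exact hA0 A
                                  · exact le_rfl

lemma preRow_nonneg (hA0 : ∀ A, 0 ≤ μA A) (i : Fin m) (P) (w) : 0 ≤ preRow μA i P w :=
  Finset.sum_nonneg fun A _ => by split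
                                  · exact hA0 A
                                  · exact le_rfl

lemma preRow_le_pre (hA0 : ∀ A, 0 ≤ μA A) (i : Fin m) (P) (w) :
    preRow μA i P w ≤ pre μA i P := by
  refine Finset.sum_le_sum fun A _ => ?_
  by_cases h : trunc i A = P ∧ A i = w
  · rw [if_pos h, if_pos h.1]
  · rw [if_neg h]
    split
    · exact hA0 A
    · exact le_refl 0

lemma sum_pre (hA1 : ∑ A, μA A = 1) (i : Fin m) :
    ∑ P, pre μA i P = 1 := by
  unfold pre
  rw [Finset.sum_comm]
  rw [← hA1]
  refine Finset.sum_congr rfl fun A _ => ?_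
  simp [Finset.sum_ite_eq]

lemma sum_preRow (i : Fin m) (P) : ∑ w, preRow μA i P w = pre μA i P := by
  unfold preRow pre
  rw [Finset.sum_comm]
  refine Finset.sum_congr rfl fun A _ => ?_
  by_cases h : trunc i A = P
  · simp [h, Finset.sum_ite_eq]
  · simp [h]

lemma sum_decomp (i : Fin m) (f : Matrix (Fin m) (Fin n) (ZMod 2) → (Fin n → ZMod 2) → ℝ) :
    ∑ A, μA A * f (trunc i A) (A i) = ∑ P, ∑ w, preRow μA i P w * f P w := by
  unfold preRow
  have step : ∀ P w, (∑ A, if trunc i A = P ∧ A i = w then μA A else 0) * f P w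
      = ∑ A, if trunc i A = P ∧ A i = w then μA A * f P w else 0 := by
    intro P w
    rw [Finset.sum_mul]
    refine Finset.sum_congr rfl fun A _ => ?_
    split
    · rfl
    · exact zero_mul _
  rw [Finset.sum_congr rfl (fun P (_ : P ∈ Finset.univ) =>
    Finset.sum_congr rfl (fun w (_ : w ∈ Finset.univ) => step P w))]
  rw [Finset.sum_congr rfl (fun P (_ : P ∈ Finset.univ) => Finset.sum_comm)]
  rw [Finset.sum_comm]
  refine Finset.sum_congr rfl fun A _ => ?_
  rw [Finset.sum_eq_single_of_mem (trunc i A) (Finset.mem_univ _)]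
  · rw [Finset.sum_eq_single_of_mem (A i) (Finset.mem_univ _)]
    · rw [if_pos ⟨rfl, rfl⟩]
    · intro w _ hw
      rw [if_neg (fun hc => hw hc.2.symm)]
  · intro P _ hP
    refine Finset.sum_eq_zero fun w _ => ?_
    rw [if_neg (fun hc => hP hc.1.symm)]

-- block source bound
lemma preRow_le_c1 (hA0 : ∀ A, 0 ≤ μA A) (n' : ℝ)
    (S : Finset (Fin m))
    (hbs : ∀ A₀, 0 < μA A₀ → ∀ i : Fin m, i ∉ S → ∀ w : Fin n → ZMod 2,
      prEvt μA (fun C => C i = w ∧ rowsAgree (i : ℕ) C A₀)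
        / prEvt μA (fun C => rowsAgree (i : ℕ) C A₀) ≤ (2 : ℝ) ^ (-n'))
    (i : Fin m) (hi : i ∉ S) (P) (w) :
    preRow μA i P w ≤ (2:ℝ) ^ (-n') * pre μA i P := by
  by_cases hp : 0 < pre μA i P
  · obtain ⟨A₀, hA₀mem, hA₀⟩ := Finset.exists_ne_zero_of_sum_ne_zero (by positivity : pre μA i P ≠ 0)
    have hA₀tr : trunc i A₀ = P := by
      by_contra hc
      rw [if_neg hc] at hA₀
      exact hA₀ rfl
    have hA₀pos : 0 < μA A₀ := by
      rw [if_pos hA₀tr] at hA₀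
      exact lt_of_le_of_ne (hA0 A₀) (Ne.symm hA₀)
    have hiff1 : ∀ C, (C i = w ∧ rowsAgree (i : ℕ) C A₀) ↔ (trunc i C = P ∧ C i = w) := by
      intro C
      rw [rowsAgree_iff_trunc, hA₀tr, and_comm]
    have hiff2 : ∀ C, (rowsAgree (i : ℕ) C A₀) ↔ trunc i C = P := by
      intro C
      rw [rowsAgree_iff_trunc, hA₀tr]
    have hnum : prEvt μA (fun C => C i = w ∧ rowsAgree (i : ℕ) C A₀) = preRow μA i P w := by
      unfold prEvt preRow
      refine Finset.sum_congr rfl fun C _ => ?_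
      by_cases hc : trunc i C = P ∧ C i = w
      · rw [if_pos ((hiff1 C).2 hc), if_pos hc]
      · rw [if_neg (fun h => hc ((hiff1 C).1 h)), if_neg hc]
    have hden : prEvt μA (fun C => rowsAgree (i : ℕ) C A₀) = pre μA i P := by
      unfold prEvt pre
      refine Finset.sum_congr rfl fun C _ => ?_
      by_cases hc : trunc i C = P
      · rw [if_pos ((hiff2 C).2 hc), if_pos hc]
      · rw [if_neg (fun h => hc ((hiff2 C).1 h)), if_neg hc]
    have := hbs A₀ hA₀pos i hi w
    rw [hnum, hden, div_le_iff₀ hp] at this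
    linarith [this]
  · have hp0 : pre μA i P = 0 :=
      le_antisymm (not_lt.mp hp) (pre_nonneg hA0 i P)
    have := preRow_le_pre hA0 i P w
    rw [hp0] at this ⊢
    rw [mul_zero]
    exact this


variable {μx : (Fin n → ZMod 2) → ℝ}

noncomputable def hfun (μA : Matrix (Fin m) (Fin n) (ZMod 2) → ℝ) (i : Fin m)
    (P : Matrix (Fin m) (Fin n) (ZMod 2)) (x : Fin n → ZMod 2) : ℝ :=
  ∑ w, preRow μA i P w * sgn (w ⬝ᵥ x)

noncomputable def Dz (μA : Matrix (Fin m) (Fin n) (ZMod 2) → ℝ)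
    (μx : (Fin n → ZMod 2) → ℝ) (T : Finset (Fin m)) (z : Fin m → ZMod 2) : ℝ :=
  ∑ A, ∑ x, if (∀ j ∈ T, A.mulVec x j = z j) then μA A * μx x else 0

lemma step_bound (hA0 : ∀ A, 0 ≤ μA A) (hA1 : ∑ A, μA A = 1)
    (hx0 : ∀ x, 0 ≤ μx x) (hx1 : ∑ x, μx x = 1)
    (c1 c2 ε0 : ℝ) (hε0 : 0 ≤ ε0) (hc2 : ∀ x, μx x ≤ c2)
    (hkey : (2:ℝ)^n * c1 * c2 ≤ ε0^2)
    (i : Fin m) (hrow : ∀ P w, preRow μA i P w ≤ c1 * pre μA i P)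
    (T' : Finset (Fin m)) (hT' : ∀ j ∈ T', (j:ℕ) < (i:ℕ)) :
    ∑ z : Fin m → ZMod 2, |2 * Dz μA μx (insert i T') z - Dz μA μx T' z|
      ≤ (2^m / 2^T'.card) * ε0 := by
  classical
  -- the inner signed sum
  set inner : (Fin m → ZMod 2) → ℝ := fun z =>
    ∑ A, ∑ x, (if (∀ j ∈ T', A.mulVec x j = z j) then μA A * μx x else 0)
      * sgn (A.mulVec x i + z i) with hinner
  have identity : ∀ z, 2 * Dz μA μx (insert i T') z - Dz μA μx T' z = inner z := by
    intro z
    rw [hinner]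
    unfold Dz
    rw [Finset.mul_sum, ← Finset.sum_sub_distrib]
    refine Finset.sum_congr rfl fun A _ => ?_
    rw [Finset.mul_sum, ← Finset.sum_sub_distrib]
    refine Finset.sum_congr rfl fun x _ => ?_
    by_cases hT : ∀ j ∈ T', A.mulVec x j = z j
    · rw [if_pos hT]
      by_cases hci : A.mulVec x i = z i
      · have hcond : ∀ j ∈ insert i T', A.mulVec x j = z j := by
          intro j hj
          rcases Finset.mem_insert.1 hj with rfl | hj'
          · exact hci
          · exact hT j hj'
        rw [if_pos hcond]
        have : sgn (A.mulVec x i + z i) = 1 := by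
          rw [(zmod2_add_eq_zero _ _).2 hci]
          simp [sgn]
        rw [this]; ring
      · have hcond : ¬ ∀ j ∈ insert i T', A.mulVec x j = z j := by
          intro h
          exact hci (h i (Finset.mem_insert_self i T'))
        rw [if_neg hcond]
        have hne : A.mulVec x i + z i ≠ 0 := fun h => hci ((zmod2_add_eq_zero _ _).1 h)
        have : sgn (A.mulVec x i + z i) = -1 := by simp [sgn, hne]
        rw [this]; ring
    · rw [if_neg hT]
      have hcond : ¬ ∀ j ∈ insert i T', A.mulVec x j = z j := by
        intro h
        exact hT (fun j hj => h j (Finset.mem_insert_of_mem hj))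
      rw [if_neg hcond]; ring
  -- decompose by prefix
  have decompose : ∀ z, inner z = ∑ P, ∑ w, preRow μA i P w *
      (∑ x, (if (∀ j ∈ T', P.mulVec x j = z j) then μx x else 0)
        * (sgn (w ⬝ᵥ x) * sgn (z i))) := by
    intro z
    rw [← sum_decomp i]
    rw [hinner]
    refine Finset.sum_congr rfl fun A _ => ?_
    rw [Finset.mul_sum]
    refine Finset.sum_congr rfl fun x _ => ?_
    have hmv : ∀ j ∈ T', (trunc i A).mulVec x j = A.mulVec x j := by
      intro j hj
      show (trunc i A) j ⬝ᵥ x = A j ⬝ᵥ x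
      rw [trunc_row_eq i A j (hT' j hj)]
    have hcond : (∀ j ∈ T', (trunc i A).mulVec x j = z j)
        ↔ (∀ j ∈ T', A.mulVec x j = z j) := by
      constructor
      · intro h j hj; rw [← hmv j hj]; exact h j hj
      · intro h j hj; rw [hmv j hj]; exact h j hj
    have hsgn : sgn (A.mulVec x i + z i) = sgn (A i ⬝ᵥ x) * sgn (z i) := by
      rw [← sgn_add]; rfl
    by_cases hc : ∀ j ∈ T', A.mulVec x j = z j
    · rw [if_pos hc, if_pos (hcond.2 hc), hsgn]; ring
    · rw [if_neg hc, if_neg (fun h => hc (hcond.1 h))]; ring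
  -- bound |inner z| by sums of per-prefix quantities
  have claim4 : ∀ (z : Fin m → ZMod 2) (P : Matrix (Fin m) (Fin n) (ZMod 2)), |∑ w, preRow μA i P w *
      (∑ x, (if (∀ j ∈ T', P.mulVec x j = z j) then μx x else 0)
        * (sgn (w ⬝ᵥ x) * sgn (z i)))|
      ≤ ∑ x, (if (∀ j ∈ T', P.mulVec x j = z j) then μx x else 0) * |hfun μA i P x| := by
    intro z P
    have swap : ∑ w, preRow μA i P w *
        (∑ x, (if (∀ j ∈ T', P.mulVec x j = z j) then μx x else 0)
          * (sgn (w ⬝ᵥ x) * sgn (z i)))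
        = (∑ x, (if (∀ j ∈ T', P.mulVec x j = z j) then μx x else 0) * hfun μA i P x) * sgn (z i) := by
      calc ∑ w, preRow μA i P w *
            (∑ x, (if (∀ j ∈ T', P.mulVec x j = z j) then μx x else 0)
              * (sgn (w ⬝ᵥ x) * sgn (z i)))
          = ∑ w, ∑ x, preRow μA i P w * ((if (∀ j ∈ T', P.mulVec x j = z j) then μx x else 0)
              * (sgn (w ⬝ᵥ x) * sgn (z i))) := by
            refine Finset.sum_congr rfl fun w _ => ?_
            rw [Finset.mul_sum]
        _ = ∑ x, ∑ w, preRow μA i P w * ((if (∀ j ∈ T', P.mulVec x j = z j) then μx x else 0)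
              * (sgn (w ⬝ᵥ x) * sgn (z i))) := Finset.sum_comm
        _ = (∑ x, (if (∀ j ∈ T', P.mulVec x j = z j) then μx x else 0) * hfun μA i P x) * sgn (z i) := by
            rw [Finset.sum_mul]
            refine Finset.sum_congr rfl fun x _ => ?_
            unfold hfun
            rw [Finset.mul_sum, Finset.sum_mul]
            refine Finset.sum_congr rfl fun w _ => ?_
            ring
    rw [swap, abs_mul, abs_sgn, mul_one]
    calc |∑ x, (if (∀ j ∈ T', P.mulVec x j = z j) then μx x else 0) * hfun μA i P x|
        ≤ ∑ x, |(if (∀ j ∈ T', P.mulVec x j = z j) then μx x else 0) * hfun μA i P x| :=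
          Finset.abs_sum_le_sum_abs _ _
      _ = ∑ x, (if (∀ j ∈ T', P.mulVec x j = z j) then μx x else 0) * |hfun μA i P x| := by
          refine Finset.sum_congr rfl fun x _ => ?_
          rw [abs_mul]
          congr 1
          refine abs_of_nonneg ?_
          split
          · exact hx0 x
          · exact le_rfl
  -- per-prefix Cauchy-Schwarz bound
  have claim6 : ∀ P, ∑ x, μx x * |hfun μA i P x| ≤ ε0 * pre μA i P := by
    intro P
    have hcs := cs_core (preRow μA i P) (preRow_nonneg hA0 i P)
      (c1 * pre μA i P) (pre μA i P) (hrow P) (sum_preRow i P) μx hx0 hx1 c2 hc2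
    have hpre0 : 0 ≤ pre μA i P := pre_nonneg hA0 i P
    refine le_of_pow_le_pow_left₀ (two_ne_zero) (by positivity) ?_
    calc (∑ x, μx x * |hfun μA i P x|)^2 ≤ (2:ℝ)^n * (c1 * pre μA i P) * pre μA i P * c2 := by
          unfold hfun
          exact hcs
      _ = ((2:ℝ)^n * c1 * c2) * (pre μA i P)^2 := by ring
      _ ≤ ε0^2 * (pre μA i P)^2 := by
          refine mul_le_mul_of_nonneg_right hkey (by positivity)
      _ = (ε0 * pre μA i P)^2 := by ring
  -- assemble
  have zbound : ∀ P, ∑ z : Fin m → ZMod 2,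
      (∑ x, (if (∀ j ∈ T', P.mulVec x j = z j) then μx x else 0) * |hfun μA i P x|)
      = (2^m / 2^T'.card) * ∑ x, μx x * |hfun μA i P x| := by
    intro P
    rw [Finset.sum_comm]
    rw [Finset.mul_sum]
    refine Finset.sum_congr rfl fun x _ => ?_
    have : ∀ z : Fin m → ZMod 2, (if (∀ j ∈ T', P.mulVec x j = z j) then μx x else 0) * |hfun μA i P x|
        = (if (∀ j ∈ T', P.mulVec x j = z j) then (1:ℝ) else 0) * (μx x * |hfun μA i P x|) := by
      intro z
      split
      · ring
      · ring
    rw [Finset.sum_congr rfl (fun z _ => this z), ← Finset.sum_mul, count_agree T' (P.mulVec x)]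
  calc ∑ z : Fin m → ZMod 2, |2 * Dz μA μx (insert i T') z - Dz μA μx T' z|
      = ∑ z : Fin m → ZMod 2, |inner z| := by
        refine Finset.sum_congr rfl fun z _ => ?_
        rw [identity z]
    _ ≤ ∑ z : Fin m → ZMod 2, ∑ P, (∑ x, (if (∀ j ∈ T', P.mulVec x j = z j) then μx x else 0) * |hfun μA i P x|) := by
        refine Finset.sum_le_sum fun z _ => ?_
        rw [decompose z]
        calc |∑ P, ∑ w, preRow μA i P w *
              (∑ x, (if (∀ j ∈ T', P.mulVec x j = z j) then μx x else 0)
                * (sgn (w ⬝ᵥ x) * sgn (z i)))|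
            ≤ ∑ P, |∑ w, preRow μA i P w *
              (∑ x, (if (∀ j ∈ T', P.mulVec x j = z j) then μx x else 0)
                * (sgn (w ⬝ᵥ x) * sgn (z i)))| := Finset.abs_sum_le_sum_abs _ _
          _ ≤ ∑ P, (∑ x, (if (∀ j ∈ T', P.mulVec x j = z j) then μx x else 0) * |hfun μA i P x|) :=
              Finset.sum_le_sum fun P _ => claim4 z P
    _ = ∑ P, (2^m / 2^T'.card) * ∑ x, μx x * |hfun μA i P x| := by
        rw [Finset.sum_comm]
        exact Finset.sum_congr rfl fun P _ => zbound P
    _ ≤ ∑ P, (2^m / 2^T'.card) * (ε0 * pre μA i P) := by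
        refine Finset.sum_le_sum fun P _ => ?_
        refine mul_le_mul_of_nonneg_left (claim6 P) (by positivity)
    _ = (2^m / 2^T'.card) * ε0 := by
        rw [← Finset.mul_sum, ← Finset.mul_sum, sum_pre hA1 i, mul_one]


noncomputable def Gz (μA : Matrix (Fin m) (Fin n) (ZMod 2) → ℝ)
    (μx : (Fin n → ZMod 2) → ℝ) (T : Finset (Fin m)) (z : Fin m → ZMod 2) : ℝ :=
  ((2:ℝ)^T.card / 2^m) * Dz μA μx T z

variable {μA : Matrix (Fin m) (Fin n) (ZMod 2) → ℝ} {μx : (Fin n → ZMod 2) → ℝ}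


lemma main_ind (hA0 : ∀ A, 0 ≤ μA A) (hA1 : ∑ A, μA A = 1)
    (hx0 : ∀ x, 0 ≤ μx x) (hx1 : ∑ x, μx x = 1)
    (c1 c2 ε0 : ℝ) (hε0 : 0 ≤ ε0) (hc2 : ∀ x, μx x ≤ c2)
    (hkey : (2:ℝ)^n * c1 * c2 ≤ ε0^2)
    (S : Finset (Fin m))
    (hrow : ∀ i : Fin m, i ∉ S → ∀ P w, preRow μA i P w ≤ c1 * pre μA i P) :
    ∀ T : Finset (Fin m), (∀ i ∈ T, i ∉ S) →
      (1/2) * ∑ z : Fin m → ZMod 2, |Gz μA μx T z - 1/2^m| ≤ (T.card : ℝ) * ε0 := by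
  intro T
  induction T using Finset.strongInduction with
  | _ T ih =>
    intro hTS
    rcases T.eq_empty_or_nonempty with rfl | hne
    · have hD : ∀ z : Fin m → ZMod 2, Dz μA μx ∅ z = 1 := by
        intro z
        unfold Dz
        simp only [Finset.notMem_empty, false_implies, implies_true, if_true]
        rw [← Finset.sum_mul_sum, hA1, hx1, one_mul]
      have hG : ∀ z : Fin m → ZMod 2, Gz μA μx ∅ z = 1/2^m := by
        intro z
        unfold Gz
        rw [hD]
        simp
      simp [hG]
    · set i := T.max' hne with hi
      have hiT : i ∈ T := T.max'_mem hne
      set T' := T.erase i with hT'def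
      have hsub : T' ⊂ T := Finset.erase_ssubset hiT
      have hT'S : ∀ j ∈ T', j ∉ S := fun j hj => hTS j (Finset.mem_of_mem_erase hj)
      have hT'lt : ∀ j ∈ T', (j:ℕ) < (i:ℕ) := by
        intro j hj
        have hjne : j ≠ i := Finset.ne_of_mem_erase hj
        have hle : j ≤ i := T.le_max' j (Finset.mem_of_mem_erase hj)
        exact lt_of_le_of_ne (Fin.le_def.1 hle) (fun hc => hjne (Fin.ext hc))
      have hins : insert i T' = T := Finset.insert_erase hiT
      have hcard : T.card = T'.card + 1 := by
        rw [← hins, Finset.card_insert_of_notMem (Finset.notMem_erase i T)]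
      have ih' := ih T' hsub hT'S
      have hdiff : ∀ z : Fin m → ZMod 2, Gz μA μx T z - Gz μA μx T' z
          = ((2:ℝ)^T'.card / 2^m) * (2 * Dz μA μx (insert i T') z - Dz μA μx T' z) := by
        intro z
        unfold Gz
        rw [hins, hcard, pow_succ]
        ring
      have hstep := step_bound hA0 hA1 hx0 hx1 c1 c2 ε0 hε0 hc2 hkey i
        (hrow i (hTS i hiT)) T' hT'lt
      have habs : ∀ z : Fin m → ZMod 2, |Gz μA μx T z - 1/2^m|
          ≤ |Gz μA μx T z - Gz μA μx T' z| + |Gz μA μx T' z - 1/2^m| := fun z =>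
        abs_sub_le _ _ _
      have hsum1 : ∑ z : Fin m → ZMod 2, |Gz μA μx T z - Gz μA μx T' z| ≤ ε0 := by
        calc ∑ z : Fin m → ZMod 2, |Gz μA μx T z - Gz μA μx T' z|
            = ∑ z : Fin m → ZMod 2, ((2:ℝ)^T'.card / 2^m) *
                |2 * Dz μA μx (insert i T') z - Dz μA μx T' z| := by
              refine Finset.sum_congr rfl fun z _ => ?_
              rw [hdiff z, abs_mul, abs_of_nonneg (by positivity)]
          _ = ((2:ℝ)^T'.card / 2^m) * ∑ z : Fin m → ZMod 2,
                |2 * Dz μA μx (insert i T') z - Dz μA μx T' z| := by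
              rw [Finset.mul_sum]
          _ ≤ ((2:ℝ)^T'.card / 2^m) * ((2^m / 2^T'.card) * ε0) :=
              mul_le_mul_of_nonneg_left hstep (by positivity)
          _ = ε0 := by field_simp
      calc (1/2) * ∑ z : Fin m → ZMod 2, |Gz μA μx T z - 1/2^m|
          ≤ (1/2) * ∑ z : Fin m → ZMod 2,
              (|Gz μA μx T z - Gz μA μx T' z| + |Gz μA μx T' z - 1/2^m|) := by
            refine mul_le_mul_of_nonneg_left (Finset.sum_le_sum fun z _ => habs z) (by norm_num)
        _ = (1/2) * ∑ z : Fin m → ZMod 2, |Gz μA μx T z - Gz μA μx T' z|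
            + (1/2) * ∑ z : Fin m → ZMod 2, |Gz μA μx T' z - 1/2^m| := by
            rw [Finset.sum_add_distrib]; ring
        _ ≤ (1/2) * ε0 + (T'.card : ℝ) * ε0 := by
            refine add_le_add (mul_le_mul_of_nonneg_left hsum1 (by norm_num)) ih'
        _ ≤ (T.card : ℝ) * ε0 := by
            rw [hcard]
            push_cast
            nlinarith [hε0]


lemma subtype_sum_eq (μA : Matrix (Fin m) (Fin n) (ZMod 2) → ℝ)
    (μx : (Fin n → ZMod 2) → ℝ) (T : Finset (Fin m)) :
    ∑ z : {i : Fin m // i ∈ T} → ZMod 2, |prodDistOn μA μx T z - 1/2^T.card|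
      = ∑ z : Fin m → ZMod 2, |Gz μA μx T z - 1/2^m| := by
  classical
  set e := (Equiv.piEquivPiSubtypeProd (· ∈ T) (fun _ : Fin m => ZMod 2)).symm with he
  rw [← Fintype.sum_equiv e
      (fun p => |Gz μA μx T (e p) - 1/2^m|)
      (fun z => |Gz μA μx T z - 1/2^m|) (fun p => rfl)]
  rw [Fintype.sum_prod_type]
  have key : ∀ (a : {i : Fin m // i ∈ T} → ZMod 2) (b : {i : Fin m // ¬ i ∈ T} → ZMod 2),
      Gz μA μx T (e (a, b)) = ((2:ℝ)^T.card / 2^m) * prodDistOn μA μx T a := by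
    intro a b
    unfold Gz
    congr 1
    unfold Dz prodDistOn
    refine Finset.sum_congr rfl fun A _ => Finset.sum_congr rfl fun x _ => ?_
    have hcond : (∀ j ∈ T, A.mulVec x j = e (a, b) j)
        ↔ (∀ i : {i : Fin m // i ∈ T}, A.mulVec x i.1 = a i) := by
      rw [he]
      constructor
      · intro h idx
        have h2 := h idx.1 idx.2
        rwa [Equiv.piEquivPiSubtypeProd_symm_apply, dif_pos idx.2] at h2
      · intro h j hj
        rw [Equiv.piEquivPiSubtypeProd_symm_apply, dif_pos hj]
        exact h ⟨j, hj⟩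
    by_cases hc : ∀ i : {i : Fin m // i ∈ T}, A.mulVec x i.1 = a i
    · rw [if_pos (hcond.2 hc), if_pos hc]
    · rw [if_neg (fun h => hc (hcond.1 h)), if_neg hc]
  have habs : ∀ a b, |Gz μA μx T (e (a, b)) - 1/2^m|
      = ((2:ℝ)^T.card / 2^m) * |prodDistOn μA μx T a - 1/2^T.card| := by
    intro a b
    rw [key a b]
    have : ((2:ℝ)^T.card / 2^m) * prodDistOn μA μx T a - 1/2^m
        = ((2:ℝ)^T.card / 2^m) * (prodDistOn μA μx T a - 1/2^T.card) := by
      field_simp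
    rw [this, abs_mul, abs_of_nonneg (by positivity)]
  rw [Finset.sum_congr rfl (fun a _ => Finset.sum_congr rfl (fun b _ => habs a b))]
  have hble : T.card ≤ m := by simpa using Finset.card_le_univ T
  have hcardb : (Fintype.card ({i : Fin m // ¬ i ∈ T} → ZMod 2) : ℝ) = 2^m / 2^T.card := by
    rw [Fintype.card_fun]
    simp only [ZMod.card, Fintype.card_subtype_compl, Fintype.card_fin, Fintype.card_coe]
    push_cast
    rw [pow_sub₀ (2:ℝ) (by norm_num) (by simpa using Finset.card_le_univ T), div_eq_mul_inv]
  refine Finset.sum_congr rfl fun a _ => ?_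
  rw [Finset.sum_const, nsmul_eq_mul, Finset.card_univ, hcardb]
  field_simp


end BSE

/-- If `A'` is an `(η, n(1-ζ))`-block source, `x` has min-entropy at least `α·n` with
`α ≥ 2Δ + ζ`, and `A'` and `x` are independent, then there is a set `T` of at least `(1-η)·m`
rows such that `(A'x)_T` is `(|T|·2^{-Δn})`-close to the uniform distribution on `F₂^T`. -/
theorem block_source_extraction (m n : ℕ) (hm : 1 ≤ m) (hn : 1 ≤ n)
    (η ζ Δ α : ℝ) (hη0 : 0 ≤ η) (hη1 : η ≤ 1) (hζ : 0 ≤ ζ) (hΔ : 0 ≤ Δ) (hα0 : 0 ≤ α)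
    (hα : 2 * Δ + ζ ≤ α)
    (μA : Matrix (Fin m) (Fin n) (ZMod 2) → ℝ)
    (hA0 : ∀ A, 0 ≤ μA A) (hA1 : ∑ A, μA A = 1)
    (μx : (Fin n → ZMod 2) → ℝ)
    (hx0 : ∀ x₀, 0 ≤ μx x₀) (hx1 : ∑ x₀, μx x₀ = 1)
    (hblock : IsBlockSource μA η ((n : ℝ) * (1 - ζ)))
    (hxent : ∀ x₀ : Fin n → ZMod 2, μx x₀ ≤ (2 : ℝ) ^ (-(α * (n : ℝ)))) :
    ∃ T : Finset (Fin m), (1 - η) * (m : ℝ) ≤ (T.card : ℝ) ∧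
      (1 / 2) * ∑ z : {i : Fin m // i ∈ T} → ZMod 2,
          |prodDistOn μA μx T z - 1 / 2 ^ T.card|
        ≤ (T.card : ℝ) * (2 : ℝ) ^ (-(Δ * (n : ℝ))) := by
  classical
  obtain ⟨S, hScard, hbs⟩ := hblock
  set c1 : ℝ := (2:ℝ) ^ (-((n:ℝ) * (1 - ζ))) with hc1def
  set c2 : ℝ := (2:ℝ) ^ (-(α * (n:ℝ))) with hc2def
  set ε0 : ℝ := (2:ℝ) ^ (-(Δ * (n:ℝ))) with hε0def
  have hε0 : 0 ≤ ε0 := Real.rpow_nonneg (by norm_num) _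
  have hkey : (2:ℝ)^n * c1 * c2 ≤ ε0^2 := by
    have h2 : (0:ℝ) < 2 := by norm_num
    rw [hc1def, hc2def, hε0def]
    rw [← Real.rpow_natCast (2:ℝ) n]
    rw [← Real.rpow_add h2, ← Real.rpow_add h2]
    rw [sq, ← Real.rpow_add h2]
    refine Real.rpow_le_rpow_of_exponent_le (by norm_num) ?_
    have hn0 : (0:ℝ) ≤ (n:ℝ) := Nat.cast_nonneg n
    nlinarith [mul_nonneg hn0 (by linarith : (0:ℝ) ≤ α - ζ - 2*Δ)]
  have hrow : ∀ i : Fin m, i ∉ S → ∀ P w, BSE.preRow μA i P w ≤ c1 * BSE.pre μA i P :=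
    fun i hi P w => BSE.preRow_le_c1 hA0 ((n:ℝ)*(1-ζ)) S hbs i hi P w
  have hSle : S.card ≤ m := by simpa using Finset.card_le_univ S
  refine ⟨Sᶜ, ?_, ?_⟩
  · have hcc : (Sᶜ.card : ℝ) = (m:ℝ) - S.card := by
      rw [Finset.card_compl]
      rw [Nat.cast_sub (by simpa using hSle)]
      simp
    rw [hcc]
    nlinarith [hScard]
  · have hT : ∀ i ∈ Sᶜ, i ∉ S := fun i hi => Finset.mem_compl.1 hi
    have hmain := BSE.main_ind hA0 hA1 hx0 hx1 c1 c2 ε0 hε0 hxent hkey S hrow Sᶜ hT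
    rw [BSE.subtype_sum_eq μA μx Sᶜ]
    exact hmain
end

section
/- Let G be a finite simple graph on n ≥ 2 vertices. Then either G contains a collection of at least n/(2·log₂ n) pairwise vertex-disjoint cycles, or G contains an independent set of size at least n/12. -/
open Finset

section Aux
open SimpleGraph


section basics
variable {W : Type*} [DecidableEq W] {G : SimpleGraph W} {v x y z u : W}

lemma cycle_of_adj_walk (h : G.Adj x y) (p : G.Walk y x) (he : s(x, y) ∉ p.edges) :
    ∃ (u : W) (c : G.Walk u u), c.IsCycle ∧ c.length ≤ p.length + 1 := by
  refine ⟨x, Walk.cons h p.toPath, ?_, ?_⟩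
  · exact SimpleGraph.Path.cons_isCycle p.toPath h
      (fun hmem => he (Walk.edges_bypass_subset p hmem))
  · exact Nat.add_le_add_right (Walk.length_bypass_le p) 1

lemma dist_le_of_mem_support (p : G.Walk v x) (hz : z ∈ p.support) :
    G.dist v z ≤ p.length :=
  le_trans (dist_le (p.takeUntil z hz)) (Walk.length_takeUntil_le p hz)

lemma eq_end_of_mem_support_dist (p : G.Walk v x) (hz : z ∈ p.support)
    (hd : G.dist v z = p.length) : z = x := by
  have hsum : (p.takeUntil z hz).length + (p.dropUntil z hz).length = p.length := by
    conv_rhs => rw [← Walk.take_spec p hz]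
    rw [Walk.length_append]
  have h1 : G.dist v z ≤ (p.takeUntil z hz).length := dist_le _
  have h2 : (p.dropUntil z hz).length = 0 := by omega
  exact Walk.eq_of_length_eq_zero h2

lemma cycle_of_two (hux : G.Adj u x) (huy : G.Adj u y) (hxy : x ≠ y)
    (px : G.Walk v x) (py : G.Walk v y)
    (hu1 : u ∉ px.support) (hu2 : u ∉ py.support) :
    ∃ (w : W) (c : G.Walk w w), c.IsCycle ∧ c.length ≤ px.length + py.length + 2 := by
  set p : G.Walk u y := Walk.cons hux (px.reverse.append py) with hp
  have he : s(y, u) ∉ p.edges := by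
    intro hmem
    rw [hp] at hmem
    simp only [Walk.edges_cons, Walk.edges_append, Walk.edges_reverse, List.mem_cons,
      List.mem_append, List.mem_reverse] at hmem
    rcases hmem with h | h | h
    · rw [Sym2.eq_iff] at h
      rcases h with ⟨h1, h2⟩ | ⟨h1, h2⟩
      · exact huy.ne h1.symm
      · exact hxy h1.symm
    · exact hu1 (Walk.snd_mem_support_of_mem_edges px h)
    · exact hu2 (Walk.snd_mem_support_of_mem_edges py h)
  obtain ⟨w, c, hc, hl⟩ := cycle_of_adj_walk huy.symm p he
  have hplen : p.length = px.length + py.length + 1 := by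
    rw [hp]
    simp [Walk.length_append, Walk.length_reverse]
  exact ⟨w, c, hc, by omega⟩

end basics

lemma short_cycle {W : Type*} [DecidableEq W] [Fintype W] (H : SimpleGraph W) [DecidableRel H.Adj]
    (hne : Nonempty W) (hdeg : ∀ w, 5 ≤ H.degree w) (r : ℕ)
    (hr : 3 * Fintype.card W < 3 + 5 * (4 ^ r - 1)) :
    ∃ (u : W) (c : H.Walk u u), c.IsCycle ∧ c.length ≤ 2 * r := by
  classical
  by_contra hcon
  push_neg at hcon
  have HG : ∀ (u : W) (c : H.Walk u u), c.IsCycle → 2 * r + 1 ≤ c.length := by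
    intro u c hc
    have := hcon u c hc
    omega
  obtain ⟨v⟩ := hne
  set A : ℕ → Finset W := fun i => univ.filter (fun u => H.Reachable v u ∧ H.dist v u = i)
    with hA
  have memA : ∀ i u, u ∈ A i ↔ H.Reachable v u ∧ H.dist v u = i := by
    intro i u; simp [hA]
  -- spheres are pairwise disjoint
  have Adisj : ∀ i j, i ≠ j → Disjoint (A i) (A j) := by
    intro i j hij
    rw [Finset.disjoint_left]
    intro a ha ha'
    rw [memA] at ha ha'
    exact hij (ha.2 ▸ ha'.2 ▸ rfl)
  -- shortest walk picker
  have pick : ∀ u, H.Reachable v u → ∃ p : H.Walk v u, p.length = H.dist v u := by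
    intro u hu
    exact hu.exists_walk_length_eq_dist
  -- neighbors' distances
  have nbr_dist : ∀ u w, H.Reachable v u → H.Adj u w →
      H.dist v u ≤ H.dist v w + 1 ∧ H.dist v w ≤ H.dist v u + 1 := by
    intro u w hu huw
    obtain ⟨pu, hpu⟩ := pick u hu
    have hw : H.Reachable v w := hu.trans huw.reachable
    obtain ⟨pw, hpw⟩ := pick w hw
    constructor
    · have := dist_le (pw.concat huw.symm)
      rw [Walk.length_concat] at this
      omega
    · have := dist_le (pu.concat huw)
      rw [Walk.length_concat] at this
      omega
  -- no edge within a sphere at level i with 2*i + 1 ≤ 2*r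
  have no_level_edge : ∀ i, 2 * i + 1 ≤ 2 * r → ∀ u w, u ∈ A i → w ∈ A i → ¬H.Adj u w := by
    intro i hi u w hu hw huw
    rw [memA] at hu hw
    obtain ⟨pu, hpu⟩ := pick u hu.1
    obtain ⟨pw, hpw⟩ := pick w hw.1
    have hne : u ≠ w := huw.ne
    have hq : s(u, w) ∉ (pw.reverse.append pu).edges := by
      intro hmem
      simp only [Walk.edges_append, Walk.edges_reverse, List.mem_append, List.mem_reverse]
        at hmem
      rcases hmem with h | h
      · have : u ∈ pw.support := Walk.fst_mem_support_of_mem_edges pw h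
        exact hne (eq_end_of_mem_support_dist pw this (by omega))
      · have : w ∈ pu.support := Walk.snd_mem_support_of_mem_edges pu h
        exact hne (eq_end_of_mem_support_dist pu this (by omega)).symm
    obtain ⟨a, c, hc, hl⟩ := cycle_of_adj_walk huw (pw.reverse.append pu) hq
    have := HG a c hc
    rw [Walk.length_append, Walk.length_reverse] at hl
    omega
  -- two neighbors in sphere i of a vertex beyond sphere i give a short cycle: contradiction
  have no_two : ∀ i, 2 * i + 2 ≤ 2 * r → ∀ u x y, x ∈ A i → y ∈ A i → x ≠ y →
      H.Adj u x → H.Adj u y → i < H.dist v u → False := by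
    intro i hi u x y hx hy hxy hux huy hdu
    rw [memA] at hx hy
    obtain ⟨px, hpx⟩ := pick x hx.1
    obtain ⟨py, hpy⟩ := pick y hy.1
    have hu1 : u ∉ px.support := fun hmem => by
      have := dist_le_of_mem_support px hmem; omega
    have hu2 : u ∉ py.support := fun hmem => by
      have := dist_le_of_mem_support py hmem; omega
    obtain ⟨w, c, hc, hl⟩ := cycle_of_two hux huy hxy px py hu1 hu2
    have := HG w c hc
    omega
  -- growth
  have grow : ∀ i, 1 ≤ i → i + 1 ≤ r → 4 * (A i).card ≤ (A (i + 1)).card := by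
    intro i hi1 hir
    set f : W → Finset W := fun u => H.neighborFinset u ∩ A (i + 1) with hf
    have hsub : ∀ u, f u ⊆ A (i + 1) := fun u => Finset.inter_subset_right
    have hdisj : ∀ u ∈ A i, ∀ u' ∈ A i, u ≠ u' → Disjoint (f u) (f u') := by
      intro u hu u' hu' hne
      rw [Finset.disjoint_left]
      intro w hw hw'
      rw [hf] at hw hw'
      simp only [Finset.mem_inter, mem_neighborFinset] at hw hw'
      have hwA := hw.2
      rw [memA] at hwA
      exact no_two i (by omega) w u u' hu hu' hne hw.1.symm hw'.1.symm (by omega)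
    have hcard : ∀ u ∈ A i, 4 ≤ (f u).card := by
      intro u hu
      have huA := hu
      rw [memA] at huA
      set B : Finset W := H.neighborFinset u \ f u with hB
      have hBmem : ∀ w ∈ B, w ∈ A (i - 1) := by
        intro w hwB
        rw [hB] at hwB
        simp only [Finset.mem_sdiff, mem_neighborFinset, hf, Finset.mem_inter, not_and]
          at hwB
        obtain ⟨hadj, hnot⟩ := hwB
        have hwreach : H.Reachable v w := huA.1.trans hadj.reachable
        have hd := nbr_dist u w huA.1 hadj
        have hne1 : H.dist v w ≠ i + 1 := by
          intro hd1
          exact hnot (by simpa [mem_neighborFinset] using hadj) (by rw [memA]; exact ⟨hwreach, hd1⟩)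
        have hne2 : H.dist v w ≠ i := by
          intro hd2
          have hwAi : w ∈ A i := by rw [memA]; exact ⟨hwreach, hd2⟩
          exact no_level_edge i (by omega) u w hu hwAi hadj
        rw [memA]
        refine ⟨hwreach, by omega⟩
      have hBcard : B.card ≤ 1 := by
        rw [Finset.card_le_one]
        intro a ha b hb
        by_contra hab
        have haA := hBmem a ha
        have hbA := hBmem b hb
        rw [hB] at ha hb
        simp only [Finset.mem_sdiff, mem_neighborFinset] at ha hb
        exact no_two (i - 1) (by omega) u a b haA hbA hab ha.1 hb.1 (by omega)
      have hfsub : f u ⊆ H.neighborFinset u := Finset.inter_subset_left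
      have := Finset.card_sdiff_add_card_eq_card hfsub
      have hdeg5 : 5 ≤ (H.neighborFinset u).card := hdeg u
      rw [← hB] at this
      omega
    calc 4 * (A i).card ≤ ∑ u ∈ A i, (f u).card := by
          simpa [mul_comm] using Finset.card_nsmul_le_sum (A i) (fun u => (f u).card) 4 hcard
      _ = ((A i).biUnion f).card := (Finset.card_biUnion hdisj).symm
      _ ≤ (A (i + 1)).card := Finset.card_le_card (by
          intro w hw
          simp only [Finset.mem_biUnion] at hw
          obtain ⟨u, _, hwu⟩ := hw
          exact hsub u hwu)
  -- base cases
  have hA0 : 1 ≤ (A 0).card := by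
    apply Finset.card_pos.mpr
    exact ⟨v, by rw [memA]; exact ⟨Reachable.refl v, dist_self⟩⟩
  have hA1 : 5 ≤ (A 1).card := by
    have : H.neighborFinset v ⊆ A 1 := by
      intro w hw
      rw [mem_neighborFinset] at hw
      rw [memA]
      exact ⟨hw.reachable, dist_eq_one_iff_adj.mpr hw⟩
    exact le_trans (hdeg v) (Finset.card_le_card this)
  -- main invariant
  have main : ∀ i, 1 ≤ i → i ≤ r →
      5 * 4 ^ (i - 1) ≤ (A i).card ∧
      3 + 5 * (4 ^ i - 1) ≤ 3 * ∑ j ∈ range (i + 1), (A j).card := by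
    intro i
    induction i with
    | zero => omega
    | succ i ih =>
      intro _ hir
      rcases Nat.eq_or_lt_of_le (Nat.one_le_iff_ne_zero.mpr (Nat.succ_ne_zero i)) with h1 | h1
      · -- i + 1 = 1
        have hi0 : i = 0 := by omega
        subst hi0
        constructor
        · simpa using hA1
        · rw [Finset.sum_range_succ, Finset.sum_range_one]
          have h4 : (4:ℕ) ^ 1 = 4 := pow_one 4
          omega
      · -- i ≥ 1
        have hi1 : 1 ≤ i := by omega
        obtain ⟨hAi, hsum⟩ := ih hi1 (by omega)
        have hgrow := grow i hi1 (by omega)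
        have hpow : 4 ^ i = 4 * 4 ^ (i - 1) := by
          conv_lhs => rw [show i = (i - 1) + 1 by omega]
          rw [pow_succ]
          ring
        constructor
        · have : 5 * 4 ^ ((i + 1) - 1) = 4 * (5 * 4 ^ (i - 1)) := by
            simp only [Nat.add_sub_cancel]
            rw [hpow]; ring
          omega
        · rw [Finset.sum_range_succ]
          have h41 : 4 ^ (i + 1) = 16 * 4 ^ (i - 1) := by
            conv_lhs => rw [show i + 1 = (i - 1) + 2 by omega]
            rw [pow_add]
            ring
          have hp1 : 1 ≤ 4 ^ (i - 1) := Nat.one_le_pow _ _ (by norm_num)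
          omega
  -- conclude
  rcases Nat.eq_zero_or_pos r with hr0 | hrpos
  · subst hr0
    norm_num at hr
    have : 1 ≤ Fintype.card W := Fintype.card_pos_iff.mpr ⟨v⟩
    omega
  · obtain ⟨_, hsum⟩ := main r hrpos le_rfl
    have hle : ∑ j ∈ range (r + 1), (A j).card ≤ Fintype.card W := by
      rw [← Finset.card_biUnion (fun i _ j _ hij => Adisj i j hij)]
      exact Finset.card_le_card (Finset.subset_univ _) |>.trans (by simp)
    omega


/-- Auxiliary search for the radius bound. -/
def rbAux (m : ℕ) : ℕ → ℕ → ℕ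
  | 0, R => R
  | fuel + 1, R => if 3 * m + 2 < 5 * 4 ^ R then R else rbAux m fuel (R + 1)

/-- `rb m` is the least `R ≥ 1` with `3m + 2 < 5·4^R`. -/
def rb (m : ℕ) : ℕ := rbAux m m 1

lemma rbAux_spec (m : ℕ) : ∀ fuel R, 3 * m + 2 < 5 * 4 ^ (R + fuel) →
    3 * m + 2 < 5 * 4 ^ (rbAux m fuel R) := by
  intro fuel
  induction fuel with
  | zero => intro R h; simpa [rbAux] using h
  | succ f ih =>
    intro R h
    rw [rbAux]
    split
    · assumption
    · exact ih (R + 1) (by rw [show R + 1 + f = R + (f + 1) by omega]; exact h)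

lemma rb_spec (m : ℕ) : 3 * m + 2 < 5 * 4 ^ rb m := by
  apply rbAux_spec
  have h1 : m < 4 ^ m := Nat.lt_pow_self (by norm_num : 1 < 4)
  have h2 : 4 ^ m ≤ 4 ^ (1 + m) := Nat.pow_le_pow_right (by norm_num) (by omega)
  omega

lemma rbAux_le (m : ℕ) : ∀ fuel R0 R, R0 ≤ R → 3 * m + 2 < 5 * 4 ^ R →
    rbAux m fuel R0 ≤ R := by
  intro fuel
  induction fuel with
  | zero => intro R0 R h _; simpa [rbAux] using h
  | succ f ih =>
    intro R0 R h hR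
    rw [rbAux]
    split
    · exact h
    · rename_i hc
      apply ih
      · rcases Nat.eq_or_lt_of_le h with h1 | h1
        · subst h1; omega
        · omega
      · exact hR

lemma rb_le (m R : ℕ) (h1 : 1 ≤ R) (h : 3 * m + 2 < 5 * 4 ^ R) : rb m ≤ R :=
  rbAux_le m m 1 R h1 h

lemma rb_one_le (m : ℕ) : 1 ≤ rb m := by
  have : ∀ fuel R, R ≤ rbAux m fuel R := by
    intro fuel
    induction fuel with
    | zero => intro R; simp [rbAux]
    | succ f ih => intro R; rw [rbAux]; split; · omega
                   · exact le_trans (by omega) (ih (R + 1))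
  exact this m 1

lemma rb_mono {m m' : ℕ} (h : m ≤ m') : rb m ≤ rb m' := by
  apply rb_le m _ (rb_one_le m')
  have := rb_spec m'
  omega

lemma rb_low (m : ℕ) (hm : 1 ≤ m) : 5 * 4 ^ (rb m - 1) ≤ 3 * m + 2 := by
  have key : ∀ fuel R, 1 ≤ R → 5 * 4 ^ (R - 1) ≤ 3 * m + 2 →
      5 * 4 ^ (rbAux m fuel R - 1) ≤ 3 * m + 2 := by
    intro fuel
    induction fuel with
    | zero => intro R _ h; simpa [rbAux] using h
    | succ f ih =>
      intro R hR h
      rw [rbAux]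
      split
      · exact h
      · rename_i hc
        apply ih (R + 1) (by omega)
        simpa using by omega
  apply key m 1 le_rfl
  simpa using by omega

/-- Bound on the total length of the cycles. -/
def sb : ℕ → ℕ → ℕ
  | _, 0 => 0
  | n, k + 1 => 2 * rb n + sb (n - 3) k

lemma sb_le (n k : ℕ) : sb n k ≤ k * (2 * rb n) := by
  induction k generalizing n with
  | zero => simp [sb]
  | succ k ih =>
    rw [sb]
    have h1 : sb (n - 3) k ≤ k * (2 * rb (n - 3)) := ih (n - 3)
    have h2 : rb (n - 3) ≤ rb n := rb_mono (by omega)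
    have : k * (2 * rb (n - 3)) ≤ k * (2 * rb n) := by
      apply Nat.mul_le_mul_left
      omega
    calc 2 * rb n + sb (n - 3) k ≤ 2 * rb n + k * (2 * rb n) := by omega
      _ = (k + 1) * (2 * rb n) := by ring


set_option maxRecDepth 20000 in
set_option maxHeartbeats 4000000 in
set_option exponentiation.threshold 400 in
lemma arith_small : ∀ n < 309, ∀ k < 42, 13 ≤ n →
    n ^ (2 * k) < 2 ^ n → 12 * sb n k ≤ 7 * n := by decide

set_option exponentiation.threshold 400 in
lemma arith (n k : ℕ) (hn : 13 ≤ n) (h1 : n ^ (2 * k) < 2 ^ n) :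
    12 * sb n k ≤ 7 * n := by
  rcases lt_or_ge n 309 with hsmall | hlarge
  · -- small case
    have hk : k < 42 := by
      by_contra hk
      push_neg at hk
      have h84 : (13 : ℕ) ^ 84 ≤ n ^ (2 * k) := by
        calc (13:ℕ) ^ 84 ≤ 13 ^ (2 * k) := Nat.pow_le_pow_right (by norm_num) (by omega)
          _ ≤ n ^ (2 * k) := Nat.pow_le_pow_left hn _
      have h2n : (2:ℕ) ^ n ≤ 2 ^ 308 := Nat.pow_le_pow_right (by norm_num) (by omega)
      have : (2:ℕ) ^ 308 < 13 ^ 84 := by norm_num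
      omega
    exact arith_small n hsmall k hk hn h1
  · -- large case
    rcases Nat.eq_zero_or_pos k with hk0 | hk0
    · subst hk0; simp [sb]
    set R := rb n with hR
    have hsb : sb n k ≤ k * (2 * R) := sb_le n k
    suffices h : 12 * (k * (2 * R)) ≤ 7 * n by omega
    -- real versions
    have hn0 : (0:ℝ) < n := by positivity
    have hn1 : (1:ℝ) < n := by exact_mod_cast (by omega : 1 < n)
    set L : ℝ := Real.logb 2 n with hL
    have hLpos : 0 < L := Real.logb_pos (by norm_num) hn1
    -- from h1 : 2k·L < n
    have h2k : (2 * k : ℝ) * L < n := by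
      have hcast : ((n : ℝ)) ^ (2 * k) < (2:ℝ) ^ (n:ℕ) := by exact_mod_cast h1
      have hlog : Real.logb 2 ((n:ℝ) ^ (2 * k)) < Real.logb 2 ((2:ℝ) ^ (n:ℕ)) :=
        Real.logb_lt_logb (by norm_num) (by positivity) hcast
      rw [Real.logb_pow, Real.logb_pow, Real.logb_self_eq_one (by norm_num), mul_one] at hlog
      push_cast at hlog
      linarith
    have hxpos : (0:ℝ) < (3 * n + 2) / 5 := by positivity
    set X : ℝ := Real.logb 2 ((3 * (n:ℝ) + 2) / 5) with hXdef
    have hX : (0:ℝ) ≤ X := by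
      apply Real.logb_nonneg (by norm_num)
      rw [le_div_iff₀ (by norm_num)]
      have h13 : (13:ℝ) ≤ n := by exact_mod_cast hn
      nlinarith
    have h2X : (2:ℝ) ^ X = (3 * (n:ℝ) + 2) / 5 :=
      Real.rpow_logb (by norm_num) (by norm_num) hxpos
    have hRX : 2 * ((R:ℝ) - 1) ≤ X := by
      have hlow := rb_low n (by omega)
      have hcast : (5:ℝ) * 4 ^ (R - 1) ≤ 3 * (n:ℝ) + 2 := by exact_mod_cast hlow
      have h4 : ((4:ℝ)) ^ (R - 1) ≤ (3 * (n:ℝ) + 2) / 5 := by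
        rw [le_div_iff₀ (by norm_num)]
        linarith
      have hlog : Real.logb 2 ((4:ℝ) ^ (R - 1)) ≤ X :=
        Real.logb_le_logb_of_le (by norm_num) (by positivity) h4
      rw [Real.logb_pow] at hlog
      have h42 : Real.logb 2 (4:ℝ) = 2 := by
        rw [show (4:ℝ) = 2 ^ (2:ℕ) by norm_num, Real.logb_pow,
          Real.logb_self_eq_one (by norm_num)]
        norm_num
      rw [h42] at hlog
      have hRc : ((R - 1 : ℕ) : ℝ) = (R:ℝ) - 1 := by
        have h1R := rb_one_le n
        push_cast [Nat.cast_sub (by omega : 1 ≤ R)]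
        ring
      rw [hRc] at hlog
      linarith
    have hkey : 12 + 6 * X ≤ 7 * L := by
      have hn7 : (0:ℝ) < (n:ℝ) ^ (7:ℕ) := by positivity
      have h7L : 7 * L = Real.logb 2 ((n:ℝ) ^ (7:ℕ)) := by
        rw [Real.logb_pow, hL]; norm_num
      rw [h7L, Real.le_logb_iff_rpow_le (by norm_num) hn7]
      have e1 : (2:ℝ) ^ ((12:ℝ) + 6 * X) = 4096 * ((3 * (n:ℝ) + 2) / 5) ^ (6:ℕ) := by
        rw [Real.rpow_add (by norm_num)]
        congr 1
        · rw [show (12:ℝ) = ((12:ℕ):ℝ) by norm_num, Real.rpow_natCast]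
          norm_num
        · rw [show (6:ℝ) * X = X * ((6:ℕ):ℝ) by push_cast; ring,
            Real.rpow_mul (by norm_num), Real.rpow_natCast, h2X]
      rw [e1]
      -- polynomial estimate
      have hb : (3 * (n:ℝ) + 2) / 5 ≤ 13 * (n:ℝ) / 20 := by
        rw [div_le_div_iff₀ (by norm_num) (by norm_num)]
        have h13 : (309:ℝ) ≤ n := by exact_mod_cast hlarge
        nlinarith
      have hb0 : (0:ℝ) ≤ (3 * (n:ℝ) + 2) / 5 := le_of_lt hxpos
      have hp : ((3 * (n:ℝ) + 2) / 5) ^ (6:ℕ) ≤ (13 * (n:ℝ) / 20) ^ (6:ℕ) :=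
        pow_le_pow_left₀ hb0 hb 6
      have h309 : (309:ℝ) ≤ n := by exact_mod_cast hlarge
      have hfin : 4096 * (13 * (n:ℝ) / 20) ^ (6:ℕ) ≤ (n:ℝ) ^ (7:ℕ) := by
        have expand : (13 * (n:ℝ) / 20) ^ (6:ℕ) = (4826809 / 64000000) * (n:ℝ)^(6:ℕ) := by
          field_simp
          ring
        rw [expand]
        have h7 : (n:ℝ)^(7:ℕ) = (n:ℝ) * (n:ℝ)^(6:ℕ) := by ring
        rw [h7]
        have h6pos : (0:ℝ) ≤ (n:ℝ)^(6:ℕ) := by positivity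
        have : (4096 * (4826809 / 64000000) : ℝ) ≤ (n:ℝ) := by
          norm_num
          linarith
        nlinarith
      nlinarith
    have hLR : 12 * (R:ℝ) ≤ 7 * L := by linarith
    have final : (12 * (k * (2 * R)) : ℝ) ≤ 7 * n := by
      have hk0' : (0:ℝ) ≤ 2 * k := by positivity
      calc (12 * (k * (2 * R)) : ℝ) = (2 * k) * (12 * R) := by ring
        _ ≤ (2 * k) * (7 * L) := mul_le_mul_of_nonneg_left hLR hk0'
        _ = 7 * ((2 * k) * L) := by ring
        _ ≤ 7 * n := by push_cast; push_cast at h2k; nlinarith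
    exact_mod_cast final


variable {V : Type*} [Fintype V] [DecidableEq V]

/-- support Finset of a cycle has as many elements as the length. -/
lemma cycle_card_support {G : SimpleGraph V} {u : V} {c : G.Walk u u} (hc : c.IsCycle) :
    c.support.toFinset.card = c.length := by
  cases c with
  | nil => exact absurd hc.three_le_length (by simp)
  | cons h p =>
    have hnodup : p.support.Nodup := hc.support_nodup
    rw [Walk.support_cons]
    have hmem : u ∈ p.support := p.end_mem_support
    have : (u :: p.support).toFinset = p.support.toFinset := by
      simp [List.toFinset_cons, Finset.insert_eq_self.mpr (List.mem_toFinset.mpr hmem)]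
    rw [this, List.toFinset_card_of_nodup hnodup, Walk.length_support, Walk.length_cons]

lemma rec_main (G : SimpleGraph V) [DecidableRel G.Adj] (s : Finset V) :
    ∃ (cs : List (Σ v : V, G.Walk v v)) (I : Fin 5 → Finset V),
      (∀ c ∈ cs, c.2.IsCycle) ∧
      (∀ i (h : i < cs.length), (cs.get ⟨i, h⟩).2.length ≤ 2 * rb (s.card - 3 * i)) ∧
      (∀ c ∈ cs, ∀ x ∈ c.2.support, x ∈ s) ∧
      List.Pairwise (fun c d => ∀ x ∈ c.2.support, x ∉ d.2.support) cs ∧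
      (∀ j, I j ⊆ s) ∧
      (∀ j, ∀ a ∈ I j, ∀ b ∈ I j, ¬ G.Adj a b) ∧
      (∀ j j', j ≠ j' → Disjoint (I j) (I j')) ∧
      s.card = (cs.map (fun c => c.2.length)).sum + ∑ j, (I j).card := by
  induction s using Finset.strongInduction with
  | _ s IH =>
  rcases Finset.eq_empty_or_nonempty s with rfl | hs
  · exact ⟨[], fun _ => ∅, by simp, by simp, by simp, by simp, by simp, by simp, by simp, by simp⟩
  by_cases hpeel : ∃ v ∈ s, ((s.erase v).filter (fun y => G.Adj v y)).card ≤ 4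
  · -- peel a low-degree vertex
    obtain ⟨v, hv, hvdeg⟩ := hpeel
    set t := s.erase v with ht
    have htss : t ⊂ s := Finset.erase_ssubset hv
    obtain ⟨cs, I, h1, h2, h3, h4, h5, h6, h7, h8⟩ := IH t htss
    -- find a good class
    set bad : Finset (Fin 5) := univ.filter (fun j => ∃ w ∈ I j, G.Adj v w) with hbad
    have hbadcard : bad.card ≤ 4 := by
      classical
      have hinj : ∀ j ∈ bad, (if h : ∃ w ∈ I j, G.Adj v w then h.choose else v) ∈
          t.filter (fun y => G.Adj v y) := by
        intro j hj
        rw [hbad, Finset.mem_filter] at hj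
        rw [dif_pos hj.2]
        obtain ⟨hw1, hw2⟩ := hj.2.choose_spec
        exact Finset.mem_filter.mpr ⟨h5 j hw1, hw2⟩
      have hfle : bad.card ≤ (t.filter (fun y => G.Adj v y)).card := by
        apply Finset.card_le_card_of_injOn _ hinj
        intro j hj j' hj' heq
        simp only [Finset.mem_coe, hbad, Finset.mem_filter, Finset.mem_univ, true_and] at hj hj'
        dsimp only at heq
        rw [dif_pos hj, dif_pos hj'] at heq
        replace hj := hj.choose_spec
        replace hj' := hj'.choose_spec
        by_contra hne
        have hd := h7 j j' hne
        have ha := hj.1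
        have hb := hj'.1
        rw [heq] at ha
        exact Finset.disjoint_left.mp hd ha hb
      calc bad.card ≤ (t.filter (fun y => G.Adj v y)).card := hfle
        _ ≤ 4 := hvdeg
    have hgood : ∃ j0 : Fin 5, j0 ∉ bad := by
      by_contra hcon
      push_neg at hcon
      have : (univ : Finset (Fin 5)) ⊆ bad := fun j _ => hcon j
      have := Finset.card_le_card this
      simp at this
      omega
    obtain ⟨j0, hj0⟩ := hgood
    have hnadj : ∀ w ∈ I j0, ¬ G.Adj v w := by
      intro w hw hadj
      exact hj0 (by rw [hbad, Finset.mem_filter]; exact ⟨Finset.mem_univ _, ⟨w, hw, hadj⟩⟩)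
    have hvnot : v ∉ I j0 := fun hmem => (Finset.mem_erase.mp (h5 j0 hmem)).1 rfl
    refine ⟨cs, Function.update I j0 (insert v (I j0)), h1, ?_, ?_, h4, ?_, ?_, ?_, ?_⟩
    · intro i hi
      refine le_trans (h2 i hi) ?_
      have : t.card = s.card - 1 := by rw [ht, Finset.card_erase_of_mem hv]
      have := rb_mono (show t.card - 3 * i ≤ s.card - 3 * i by omega)
      omega
    · intro c hc x hx
      exact Finset.mem_of_mem_erase (h3 c hc x hx)
    · intro j
      rcases eq_or_ne j j0 with rfl | hne
      · rw [Function.update_self]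
        intro x hx
        rcases Finset.mem_insert.mp hx with rfl | hx'
        · exact hv
        · exact Finset.mem_of_mem_erase (h5 j hx')
      · rw [Function.update_of_ne hne]
        exact fun x hx => Finset.mem_of_mem_erase (h5 j hx)
    · intro j
      by_cases hje : j = j0
      · subst hje
        rw [Function.update_self]
        intro a ha b hb
        rcases Finset.mem_insert.mp ha with rfl | ha' <;>
          rcases Finset.mem_insert.mp hb with h | hb'
        · exact fun hadj => G.irrefl (h ▸ hadj)
        · exact hnadj b hb'
        · subst h
          exact fun hadj => hnadj a ha' hadj.symm
        · exact h6 j a ha' b hb'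
      · rw [Function.update_of_ne hje]
        exact h6 j
    · intro j j' hjj'
      have hvj : ∀ j'', j'' ≠ j0 → v ∉ I j'' := fun j'' _ hmem =>
        (Finset.mem_erase.mp (h5 j'' hmem)).1 rfl
      by_cases hje : j = j0 <;> by_cases hje' : j' = j0
      · exact absurd (hje.trans hje'.symm) hjj'
      · subst hje
        rw [Function.update_self, Function.update_of_ne hje']
        rw [Finset.disjoint_left]
        intro a ha ha'
        rcases Finset.mem_insert.mp ha with rfl | ha2
        · exact hvj j' hje' ha'
        · exact Finset.disjoint_left.mp (h7 j j' hjj') ha2 ha'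
      · subst hje'
        rw [Function.update_self, Function.update_of_ne hje]
        rw [Finset.disjoint_right]
        intro a ha ha'
        rcases Finset.mem_insert.mp ha with rfl | ha2
        · exact hvj j hje ha'
        · exact Finset.disjoint_left.mp (h7 j j' hjj') ha' ha2
      · rw [Function.update_of_ne hje, Function.update_of_ne hje']
        exact h7 j j' hjj'
    · have hsum : ∑ j, (Function.update I j0 (insert v (I j0)) j).card
          = (∑ j, (I j).card) + 1 := by
        have e1 := Finset.add_sum_erase Finset.univ
          (fun j => (Function.update I j0 (insert v (I j0)) j).card) (Finset.mem_univ j0)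
        have e2 := Finset.add_sum_erase Finset.univ
          (fun j => (I j).card) (Finset.mem_univ j0)
        have e3 : ∑ j ∈ Finset.univ.erase j0,
            (Function.update I j0 (insert v (I j0)) j).card
            = ∑ j ∈ Finset.univ.erase j0, (I j).card := by
          apply Finset.sum_congr rfl
          intro j hj
          rw [Function.update_of_ne (Finset.mem_erase.mp hj).1]
        rw [← e1, ← e2, e3, Function.update_self,
          Finset.card_insert_of_notMem hvnot]
        omega
      rw [hsum]
      have hcard : s.card = t.card + 1 := by
        rw [ht, Finset.card_erase_of_mem hv]
        have : 1 ≤ s.card := Finset.card_pos.mpr hs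
        omega
      omega
  · -- min degree ≥ 5 in induced graph: extract a short cycle
    push_neg at hpeel
    have hsne : Nonempty (↑(↑s : Set V)) := by
      obtain ⟨v, hv⟩ := hs
      exact ⟨⟨v, hv⟩⟩
    set H : SimpleGraph (↑(↑s : Set V)) := G.induce (↑s : Set V) with hH
    haveI : DecidableRel H.Adj := fun a b => by
      rw [hH]
      simp only [comap_adj, Function.Embedding.coe_subtype]
      infer_instance
    have hdeg : ∀ w : (↑(↑s : Set V)), 5 ≤ H.degree w := by
      intro w
      have h5' := hpeel ↑w w.2
      have hcardeq : H.degree w = ((s.erase ↑w).filter (fun y => G.Adj ↑w y)).card := by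
        rw [← card_neighborFinset_eq_degree]
        refine Finset.card_bij (fun (a : ↑(↑s : Set V)) (_ : a ∈ H.neighborFinset w) => (a : V))
          ?_ ?_ ?_
        · intro a ha
          rw [mem_neighborFinset] at ha
          have hadj : G.Adj ↑w ↑a := ha
          rw [Finset.mem_filter, Finset.mem_erase]
          exact ⟨⟨fun h => hadj.ne' h, a.2⟩, hadj⟩
        · intro a _ b _ hab
          exact Subtype.ext hab
        · intro b hb
          rw [Finset.mem_filter, Finset.mem_erase] at hb
          refine ⟨⟨b, hb.1.2⟩, ?_, rfl⟩
          rw [mem_neighborFinset]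
          exact hb.2
      omega
    have hcount : 3 * Fintype.card (↑(↑s : Set V)) < 3 + 5 * (4 ^ (rb s.card) - 1) := by
      have h1 : Fintype.card (↑(↑s : Set V)) = s.card := Fintype.card_coe s
      have h2 := rb_spec s.card
      have h3 : 1 ≤ (4:ℕ) ^ (rb s.card) := Nat.one_le_pow _ _ (by norm_num)
      omega
    obtain ⟨u, c, hc, hlen⟩ := short_cycle H hsne hdeg (rb s.card) hcount
    set femb : H ↪g G := SimpleGraph.Embedding.induce (↑s : Set V) with hfemb
    set c' : G.Walk (femb u) (femb u) := c.map femb.toHom with hc'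
    have hc'cyc : c'.IsCycle := hc.map femb.injective
    have hc'len : c'.length = c.length := Walk.length_map _ _
    have hc'supp : ∀ x ∈ c'.support, x ∈ s := by
      intro x hx
      rw [hc', Walk.support_map] at hx
      obtain ⟨a, _, rfl⟩ := List.mem_map.mp hx
      exact a.2
    set F : Finset V := c'.support.toFinset with hF
    have hFsub : F ⊆ s := fun x hx => hc'supp x (List.mem_toFinset.mp hx)
    have hFcard : F.card = c'.length := cycle_card_support hc'cyc
    have hF3 : 3 ≤ F.card := hFcard ▸ hc'cyc.three_le_length
    have hFne : F.Nonempty := Finset.card_pos.mp (by omega)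
    set t : Finset V := s \ F with htdef
    have htss : t ⊂ s := by
      rw [htdef]
      exact Finset.sdiff_ssubset hFsub hFne
    obtain ⟨cs, I, h1, h2, h3, h4, h5, h6, h7, h8⟩ := IH t htss
    have htcard : t.card + F.card = s.card := by
      rw [htdef]
      exact Finset.card_sdiff_add_card_eq_card hFsub
    refine ⟨⟨femb u, c'⟩ :: cs, I, ?_, ?_, ?_, ?_, ?_, h6, h7, ?_⟩
    · intro d hd
      rcases List.mem_cons.mp hd with rfl | hd'
      · exact hc'cyc
      · exact h1 d hd'
    · intro i hi
      match i with
      | 0 =>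
        simp only [List.get]
        calc c'.length = c.length := hc'len
          _ ≤ 2 * rb s.card := hlen
          _ = 2 * rb (s.card - 3 * 0) := by norm_num
      | (i + 1) =>
        simp only [List.get] at *
        have hi' : i < cs.length := by simpa using hi
        refine le_trans (h2 i hi') ?_
        have harith : t.card - 3 * i ≤ s.card - 3 * (i + 1) := by omega
        have := rb_mono harith
        omega
    · intro d hd x hx
      rcases List.mem_cons.mp hd with rfl | hd'
      · exact hc'supp x hx
      · exact (Finset.mem_sdiff.mp (h3 d hd' x hx)).1
    · rw [List.pairwise_cons]
      constructor
      · intro d hd x hx hxd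
        have hxF : x ∈ F := List.mem_toFinset.mpr hx
        have : x ∈ t := h3 d hd x hxd
        rw [htdef, Finset.mem_sdiff] at this
        exact this.2 hxF
      · exact h4
    · intro j x hx
      exact (Finset.mem_sdiff.mp (h5 j hx)).1
    · simp only [List.map_cons, List.sum_cons]
      have : s.card = F.card + t.card := by omega
      rw [this, h8, hFcard]
      omega


lemma sum_le_sb {α : Type*} (len : α → ℕ) : ∀ (l : List α) (n : ℕ),
    (∀ i (h : i < l.length), len (l.get ⟨i, h⟩) ≤ 2 * rb (n - 3 * i)) →
    (l.map len).sum ≤ sb n l.length := by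
  intro l
  induction l with
  | nil => intro n _; simp [sb]
  | cons c l ih =>
    intro n hp
    rw [List.map_cons, List.sum_cons, List.length_cons, sb]
    have h0 := hp 0 (by simp)
    simp only [List.get] at h0
    have htail : ∀ i (h : i < l.length), len (l.get ⟨i, h⟩) ≤ 2 * rb ((n - 3) - 3 * i) := by
      intro i h
      have := hp (i + 1) (by simp only [List.length_cons]; omega)
      simp only [List.get] at this
      have harith : n - 3 * (i + 1) = (n - 3) - 3 * i := by omega
      rwa [harith] at this
    have := ih (n - 3) htail
    simp only [mul_zero, Nat.sub_zero] at h0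
    omega


end Aux


/-- Every finite simple graph on `n ≥ 2` vertices either contains at least `n / (2·log₂ n)`
pairwise vertex-disjoint cycles, or contains an independent set of size at least `n / 12`. -/
theorem disjoint_cycles_or_independent_set
    {V : Type*} [Fintype V] [DecidableEq V] (G : SimpleGraph V)
    (hn : 2 ≤ Fintype.card V) :
    (∃ (k : ℕ) (c : Fin k → Σ v : V, G.Walk v v),
        (∀ i, (c i).2.IsCycle) ∧
        (∀ i j, i ≠ j → ∀ v : V, v ∈ (c i).2.support → v ∉ (c j).2.support) ∧
        (Fintype.card V : ℝ) / (2 * Real.logb 2 (Fintype.card V : ℝ)) ≤ (k : ℝ)) ∨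
      (∃ S : Finset V, (∀ a ∈ S, ∀ b ∈ S, ¬ G.Adj a b) ∧
        (Fintype.card V : ℝ) / 12 ≤ (S.card : ℝ)) := by
  classical
  set n := Fintype.card V with hndef
  rcases le_or_gt n 12 with hsmall | hbig
  · -- small case: a singleton works
    right
    obtain ⟨v⟩ : Nonempty V := Fintype.card_pos_iff.mp (by omega)
    refine ⟨{v}, ?_, ?_⟩
    · intro a ha b hb
      rw [Finset.mem_singleton] at ha hb
      subst ha; subst hb
      exact G.irrefl
    · rw [Finset.card_singleton]
      rw [div_le_iff₀ (by norm_num)]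
      push_cast
      have : (n : ℝ) ≤ 12 := by exact_mod_cast hsmall
      linarith
  · have h13 : 13 ≤ n := hbig
    haveI : DecidableRel G.Adj := Classical.decRel _
    obtain ⟨cs, I, h1, h2, h3, h4, h5, h6, h7, h8⟩ := rec_main G (Finset.univ : Finset V)
    have hucard : (Finset.univ : Finset V).card = n := Finset.card_univ
    set k := cs.length with hkdef
    by_cases hk : (n : ℝ) / (2 * Real.logb 2 (n : ℝ)) ≤ (k : ℝ)
    · left
      refine ⟨k, fun i => cs.get i, ?_, ?_, hk⟩
      · intro i
        exact h1 _ (cs.get_mem i)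
      · intro i j hij x hxi hxj
        have hpg := List.pairwise_iff_get.mp h4
        rcases lt_or_gt_of_ne hij with h | h
        · exact hpg i j h x hxi hxj
        · exact hpg j i h x hxj hxi
    · right
      push_neg at hk
      have hn1 : (1 : ℝ) < (n : ℝ) := by exact_mod_cast (by omega : 1 < n)
      set L : ℝ := Real.logb 2 (n : ℝ) with hLdef
      have hL : 0 < L := Real.logb_pos (by norm_num) hn1
      have h2L : (0:ℝ) < 2 * L := by linarith
      have hkL : (k : ℝ) * (2 * L) < n := by
        rw [div_eq_mul_inv] at hk
        calc (k:ℝ) * (2*L) < ((n:ℝ) * (2*L)⁻¹) * (2*L) := by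
              apply mul_lt_mul_of_pos_right hk h2L
          _ = n := by field_simp
      have hpow : n ^ (2 * k) < 2 ^ n := by
        have hlogb : Real.logb 2 ((n:ℝ) ^ (2 * k)) < (n : ℝ) := by
          rw [Real.logb_pow]
          push_cast
          nlinarith
        rw [Real.logb_lt_iff_lt_rpow (by norm_num) (by positivity)] at hlogb
        rw [Real.rpow_natCast] at hlogb
        exact_mod_cast hlogb
      have harith := arith n k h13 hpow
      have hsum : (cs.map (fun c => c.2.length)).sum ≤ sb n k := by
        apply sum_le_sb
        intro i hi
        have := h2 i hi
        rwa [hucard] at this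
      -- total independent count
      have htot : n = (cs.map (fun c => c.2.length)).sum + ∑ j, (I j).card := by
        rw [← hucard]; exact h8
      obtain ⟨j0, _, hj0⟩ := Finset.exists_max_image (Finset.univ : Finset (Fin 5))
        (fun j => (I j).card) ⟨0, Finset.mem_univ 0⟩
      have hIle : ∑ j, (I j).card ≤ 5 * (I j0).card := by
        calc ∑ j, (I j).card ≤ (Finset.univ : Finset (Fin 5)).card * (I j0).card := by
              apply Finset.sum_le_card_nsmul
              intro x _
              exact hj0 x (Finset.mem_univ x)
          _ = 5 * (I j0).card := by simp
      refine ⟨I j0, fun a ha b hb => h6 j0 a ha b hb, ?_⟩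
      have hfin : n ≤ 12 * (I j0).card := by omega
      rw [div_le_iff₀ (by norm_num)]
      calc (n : ℝ) ≤ 12 * ((I j0).card : ℝ) := by exact_mod_cast hfin
        _ = ((I j0).card : ℝ) * 12 := by ring
end

section
/- Let V be a finite set of attributes with a nonempty domain D_v for each v ∈ V, let k ≥ 2, and let e₁, …, e_k ⊆ V satisfy e_i ∩ e_j ⊆ e₁ for all 2 ≤ i < j ≤ k. For each i ∈ {1, …, k} let R_i be a set of tuples over e_i, i.e., a subset of Π_{v∈e_i} D_v. For i = 2, …, k define R′_i = { s ∈ R₁ : there exists s′ ∈ R_i with s(v) = s′(v) for all v ∈ e₁ ∩ e_i }. Then there exists a tuple t ∈ Π_{v∈V} D_v with t|_{e_i} ∈ R_i for every i ∈ {1, …, k} (i.e., the natural join R₁ ⋈ ⋯ ⋈ R_k is nonempty) if and only if R′_2 ∩ R′_3 ∩ ⋯ ∩ R′_k ≠ ∅. -/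
/-- For a star-shaped query with center `e i₀` (the first relation) and leaves `e i` (`i ≠ i₀`),
the natural join `R₁ ⋈ ⋯ ⋈ R_k` is nonempty if and only if the intersection of the semijoin
reductions `R'_2 ∩ ⋯ ∩ R'_k` is nonempty. -/
theorem star_join_iff_semijoin_intersection
    {V : Type*} [Fintype V] [DecidableEq V] (D : V → Type*) [∀ v, Nonempty (D v)]
    (k : ℕ) (hk : 2 ≤ k) (e : Fin k → Finset V)
    (i₀ : Fin k) (hi₀ : (i₀ : ℕ) = 0)
    (hstar : ∀ i j : Fin k, i ≠ i₀ → j ≠ i₀ → i ≠ j → (e i ∩ e j) ⊆ e i₀)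
    (R : ∀ i : Fin k, Set (∀ v : {x : V // x ∈ e i}, D v.1)) :
    (∃ t : ∀ v : V, D v, ∀ i : Fin k,
        (fun v : {x : V // x ∈ e i} => t v.1) ∈ R i) ↔
      (∃ s : ∀ v : {x : V // x ∈ e i₀}, D v.1, ∀ i : Fin k, i ≠ i₀ →
        s ∈ R i₀ ∧ ∃ s' ∈ R i, ∀ (v : V) (hv0 : v ∈ e i₀) (hvi : v ∈ e i),
          s ⟨v, hv0⟩ = s' ⟨v, hvi⟩) := by
  classical
  have hj₁ : ∃ j : Fin k, j ≠ i₀ := by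
    refine ⟨⟨1, by omega⟩, ?_⟩
    intro h
    have := congrArg (Fin.val) h
    simp [hi₀] at this
  constructor
  · rintro ⟨t, ht⟩
    refine ⟨fun v => t v.1, fun i hi => ⟨ht i₀, fun v => t v.1, ht i, fun v hv0 hvi => rfl⟩⟩
  · rintro ⟨s, hs⟩
    -- extract the leaf tuples
    have hs' : ∀ i : Fin k, i ≠ i₀ → ∃ s' ∈ R i, ∀ (v : V) (hv0 : v ∈ e i₀) (hvi : v ∈ e i),
        s ⟨v, hv0⟩ = s' ⟨v, hvi⟩ := fun i hi => (hs i hi).2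
    choose! s' hs'R hs'ag using hs'
    have hsR : s ∈ R i₀ := by
      obtain ⟨j, hj⟩ := hj₁
      exact (hs j hj).1
    -- glue
    set t : ∀ v : V, D v := fun v =>
      if h0 : v ∈ e i₀ then s ⟨v, h0⟩
      else if h : ∃ i : Fin k, i ≠ i₀ ∧ v ∈ e i then
        s' h.choose ⟨v, h.choose_spec.2⟩
      else Classical.arbitrary (D v) with ht_def
    refine ⟨t, fun i => ?_⟩
    by_cases hi : i = i₀
    · subst hi
      have : (fun v : {x : V // x ∈ e i} => t v.1) = s := by
        funext v
        simp only [ht_def, dif_pos v.2]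
      rw [this]; exact hsR
    · have : (fun v : {x : V // x ∈ e i} => t v.1) = s' i := by
        funext v
        obtain ⟨v, hv⟩ := v
        by_cases h0 : v ∈ e i₀
        · simp only [ht_def, dif_pos h0]
          exact hs'ag i hi v h0 hv
        · have hP : ∃ j : Fin k, j ≠ i₀ ∧ v ∈ e j := ⟨i, hi, hv⟩
          simp only [ht_def, dif_neg h0, dif_pos hP]
          have hji : hP.choose = i := by
            by_contra hne
            exact h0 (hstar hP.choose i hP.choose_spec.1 hi hne
              (Finset.mem_inter.mpr ⟨hP.choose_spec.2, hv⟩))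
          have key : ∀ (j : Fin k) (hj : j = i) (h' : v ∈ e j),
              s' j ⟨v, h'⟩ = s' i ⟨v, hv⟩ := by
            rintro j rfl h'; rfl
          exact key _ hji _
      rw [this]; exact hs'R i hi
end
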